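/- If player i is an α-null player in game v, i.e., the α-marginal contribution [mc^α_i(v)](S,P) = Σ_{T∈P, T≠S} α_i(S_{−i}, τ_i^T(P))·[v(S,P) − v(S_{−i}, τ_i^T(P))] is zero for every embedded coalition (S,P) with i ∈ S, then φ^α_i(v) = 0. -/

import Mathlib

open Finset

open scoped Classical

/-- A partition of the player set `Fin n`; following the paper's convention,
`∅` is a member of every partition. -/
def IsPartition {n : ℕ} (P : Finset (Finset (Fin n))) : Prop :=
  ∅ ∈ P ∧ ∀ a : Fin n, ∃! B : Finset (Fin n), B ∈ P ∧ a ∈ B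

/-- The set `𝒫` of all partitions of `Fin n`. -/
noncomputable def allPartitions (n : ℕ) : Finset (Finset (Finset (Fin n))) :=
  Finset.univ.filter IsPartition

/-- `C_i^π`: the set of players appearing after `i` in the ordering `π`. -/
def Cafter {n : ℕ} (π : Equiv.Perm (Fin n)) (i : Fin n) : Finset (Fin n) :=
  Finset.univ.filter fun j => π.symm i < π.symm j

/-- `P_{[S]}` : the partition obtained from `P` by merging all members of `S`
into a single coalition. -/
def pmerge {n : ℕ} (P : Finset (Finset (Fin n))) (S : Finset (Fin n)) :
    Finset (Finset (Fin n)) :=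
  P.image (· \ S) ∪ {S}

/-- `τ_i^T(P)` : the partition obtained from `P` by transferring `i` from its
coalition to the coalition `T` (taking `T = ∅` means that `i` forms a new
singleton coalition). -/
def moveTo {n : ℕ} (P : Finset (Finset (Fin n))) (i : Fin n) (T : Finset (Fin n)) :
    Finset (Finset (Fin n)) :=
  ((P.erase T).image fun B => B.erase i) ∪ {insert i T} ∪ {∅}

/-- A partition-function game: a real value for every (embedded) coalition. -/
abbrev Game (n : ℕ) := Finset (Fin n) → Finset (Finset (Fin n)) → ℝ

/-- A system of weights `α_i(S, P)` (meaningful for `i ∉ S`). -/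
abbrev Weights (n : ℕ) := Fin n → Finset (Fin n) → Finset (Finset (Fin n)) → ℝ

/-- The partition `{N, ∅}` in which the grand coalition is embedded. -/
def grandPart (n : ℕ) : Finset (Finset (Fin n)) := {Finset.univ, ∅}

/-- Normalization: for every embedded coalition `(S, P)` with `i ∈ S`,
`∑_{T ∈ P_{−S}} α_i(S_{−i}, τ_i^T(P)) = 1`. -/
def Normalized {n : ℕ} (w : Weights n) : Prop :=
  ∀ (i : Fin n) (S : Finset (Fin n)) (P : Finset (Finset (Fin n))),
    IsPartition P → S ∈ P → i ∈ S →
      ∑ T ∈ P.erase S, w i (S.erase i) (moveTo P i T) = 1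

/-- Weights take values in `[0, 1]`. -/
def InRange {n : ℕ} (w : Weights n) : Prop :=
  ∀ (i : Fin n) (S : Finset (Fin n)) (P : Finset (Finset (Fin n))),
    i ∉ S → 0 ≤ w i S P ∧ w i S P ≤ 1

/-- `pr^α_π(P) = ∏_{i ∈ N} α_i(C_i^π, P_{[C_i^π]})`. -/
noncomputable def pr {n : ℕ} (w : Weights n) (π : Equiv.Perm (Fin n))
    (P : Finset (Finset (Fin n))) : ℝ :=
  ∏ i : Fin n, w i (Cafter π i) (pmerge P (Cafter π i))

/-- The extended Shapley value `φ^α` (formula (1) of the paper). -/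
noncomputable def esv {n : ℕ} (w : Weights n) (v : Game n) (i : Fin n) : ℝ :=
  ((n.factorial : ℝ))⁻¹ * ∑ π : Equiv.Perm (Fin n), ∑ P ∈ allPartitions n,
    pr w π P *
      (v (insert i (Cafter π i)) (pmerge P (insert i (Cafter π i))) -
        v (Cafter π i) (pmerge P (Cafter π i)))

/-- The `α`-marginal contribution `[mc^α_i(v)](S, P)`. -/
noncomputable def mc {n : ℕ} (w : Weights n) (v : Game n) (i : Fin n)
    (S : Finset (Fin n)) (P : Finset (Finset (Fin n))) : ℝ :=
  ∑ T ∈ P.erase S, w i (S.erase i) (moveTo P i T) * (v S P - v (S.erase i) (moveTo P i T))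

/-- A genuine partition-function game: it vanishes off embedded coalitions
(and on the empty coalition). -/
def IsGame {n : ℕ} (v : Game n) : Prop :=
  ∀ S P, ¬ (IsPartition P ∧ S ∈ P ∧ S ≠ ∅) → v S P = 0

/-- The simple game `e^{(S₀, P₀)}`. -/
noncomputable def sgame {n : ℕ} (S₀ : Finset (Fin n)) (P₀ : Finset (Finset (Fin n))) :
    Game n :=
  fun S P => if S = S₀ ∧ P = P₀ then 1 else 0

/-- The permuted game `π(v)`, with `π(v)(S, P) = v(π(S), π(P))`. -/
def permGame {n : ℕ} (π : Equiv.Perm (Fin n)) (v : Game n) : Game n :=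
  fun S P => v (S.image π) (P.image (Finset.image π))

section Aux
variable {n : ℕ}

lemma mem_pmerge {P : Finset (Finset (Fin n))} {S X : Finset (Fin n)} :
    X ∈ pmerge P S ↔ (∃ B ∈ P, B \ S = X) ∨ X = S := by
  simp [pmerge]; exact or_comm

lemma mem_moveTo {P : Finset (Finset (Fin n))} {i : Fin n} {T X : Finset (Fin n)} :
    X ∈ moveTo P i T ↔ (∃ B ∈ P.erase T, B.erase i = X) ∨ X = insert i T ∨ X = ∅ := by
  simp [moveTo, or_assoc]; exact or_rotate.symm

lemma block_unique {P : Finset (Finset (Fin n))} (h : IsPartition P)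
    {B B' : Finset (Fin n)} {a : Fin n} (hB : B ∈ P) (hB' : B' ∈ P)
    (ha : a ∈ B) (ha' : a ∈ B') : B = B' := by
  obtain ⟨C, _, hC⟩ := h.2 a
  rw [hC B ⟨hB, ha⟩, hC B' ⟨hB', ha'⟩]

lemma part_disjoint {P : Finset (Finset (Fin n))} (h : IsPartition P)
    {B B' : Finset (Fin n)} (hB : B ∈ P) (hB' : B' ∈ P) (hne : B ≠ B') :
    Disjoint B B' := by
  rw [Finset.disjoint_left]
  intro a ha ha'
  exact hne (block_unique h hB hB' ha ha')

lemma S_mem_pmerge {P : Finset (Finset (Fin n))} {S : Finset (Fin n)} :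
    S ∈ pmerge P S := by simp [pmerge]

lemma pmerge_isPartition {P : Finset (Finset (Fin n))} {S : Finset (Fin n)}
    (h : IsPartition P) : IsPartition (pmerge P S) := by
  constructor
  · exact mem_pmerge.2 (Or.inl ⟨∅, h.1, by simp⟩)
  · intro a
    by_cases ha : a ∈ S
    · refine ⟨S, ⟨S_mem_pmerge, ha⟩, ?_⟩
      rintro X ⟨hX, haX⟩
      rcases mem_pmerge.1 hX with ⟨B, _, rfl⟩ | rfl
      · exact absurd (Finset.mem_sdiff.1 haX).2 (by simpa using ha)
      · rfl
    · obtain ⟨B, ⟨hB, haB⟩, hBu⟩ := h.2 a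
      refine ⟨B \ S, ⟨mem_pmerge.2 (Or.inl ⟨B, hB, rfl⟩), Finset.mem_sdiff.2 ⟨haB, ha⟩⟩, ?_⟩
      rintro X ⟨hX, haX⟩
      rcases mem_pmerge.1 hX with ⟨B', hB', rfl⟩ | rfl
      · rw [hBu B' ⟨hB', (Finset.mem_sdiff.1 haX).1⟩]
      · exact absurd haX ha

lemma sdiff_sdiff_subset {B S S' : Finset (Fin n)} (hSS : S ⊆ S') :
    (B \ S) \ S' = B \ S' := by
  ext a
  simp only [Finset.mem_sdiff]
  exact ⟨fun h => ⟨h.1.1, h.2⟩, fun h => ⟨⟨h.1, fun hs => h.2 (hSS hs)⟩, h.2⟩⟩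

lemma pmerge_empty {P : Finset (Finset (Fin n))} (h : ∅ ∈ P) : pmerge P ∅ = P := by
  ext X
  rw [mem_pmerge]
  constructor
  · rintro (⟨B, hB, rfl⟩ | rfl)
    · simpa using hB
    · exact h
  · intro hX
    exact Or.inl ⟨X, hX, by simp⟩

lemma pmerge_pmerge {P : Finset (Finset (Fin n))} {S S' : Finset (Fin n)}
    (hSS : S ⊆ S') (h : ∅ ∈ P) : pmerge (pmerge P S) S' = pmerge P S' := by
  ext X
  rw [mem_pmerge, mem_pmerge]
  constructor
  · rintro (⟨B, hB, rfl⟩ | rfl)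
    · rcases mem_pmerge.1 hB with ⟨B', hB', rfl⟩ | rfl
      · exact Or.inl ⟨B', hB', (sdiff_sdiff_subset hSS).symm⟩
      · refine Or.inl ⟨∅, h, ?_⟩
        rw [Finset.sdiff_eq_empty_iff_subset.2 hSS, Finset.empty_sdiff]
    · exact Or.inr rfl
  · rintro (⟨B, hB, rfl⟩ | rfl)
    · refine Or.inl ⟨B \ S, mem_pmerge.2 (Or.inl ⟨B, hB, rfl⟩), ?_⟩
      exact sdiff_sdiff_subset hSS
    · exact Or.inr rfl

end Aux

section Aux2
variable {n : ℕ}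

lemma moveTo_isPartition {R : Finset (Finset (Fin n))} {S T : Finset (Fin n)} {j : Fin n}
    (hR : IsPartition R) (hS : S ∈ R) (hj : j ∈ S) (hT : T ∈ R.erase S) :
    IsPartition (moveTo R j T) := by
  have hTR : T ∈ R := Finset.mem_of_mem_erase hT
  have hTS : T ≠ S := Finset.ne_of_mem_erase hT
  have hjT : j ∉ T := fun hjT => hTS (block_unique hR hTR hS hjT hj)
  constructor
  · exact mem_moveTo.2 (Or.inr (Or.inr rfl))
  · intro a
    by_cases haj : a = j
    · subst haj
      refine ⟨insert a T, ⟨mem_moveTo.2 (Or.inr (Or.inl rfl)), Finset.mem_insert_self a T⟩, ?_⟩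
      rintro X ⟨hX, haX⟩
      rcases mem_moveTo.1 hX with ⟨B, hB, rfl⟩ | rfl | rfl
      · exact absurd haX (Finset.notMem_erase a B)
      · rfl
      · exact absurd haX (Finset.notMem_empty a)
    · by_cases haT : a ∈ T
      · refine ⟨insert j T, ⟨mem_moveTo.2 (Or.inr (Or.inl rfl)), Finset.mem_insert_of_mem haT⟩, ?_⟩
        rintro X ⟨hX, haX⟩
        rcases mem_moveTo.1 hX with ⟨B, hB, rfl⟩ | rfl | rfl
        · exact absurd
            (block_unique hR (Finset.mem_of_mem_erase hB) hTR
              (Finset.mem_of_mem_erase haX) haT)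
            (Finset.ne_of_mem_erase hB)
        · rfl
        · exact absurd haX (Finset.notMem_empty a)
      · obtain ⟨B, ⟨hB, haB⟩, hBu⟩ := hR.2 a
        have hBT : B ≠ T := fun h => haT (h ▸ haB)
        refine ⟨B.erase j,
          ⟨mem_moveTo.2 (Or.inl ⟨B, Finset.mem_erase.2 ⟨hBT, hB⟩, rfl⟩),
            Finset.mem_erase.2 ⟨haj, haB⟩⟩, ?_⟩
        rintro X ⟨hX, haX⟩
        rcases mem_moveTo.1 hX with ⟨B', hB', rfl⟩ | rfl | rfl
        · rw [hBu B' ⟨Finset.mem_of_mem_erase hB', Finset.mem_of_mem_erase haX⟩]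
        · rcases Finset.mem_insert.1 haX with h | h
          · exact absurd h haj
          · exact absurd h haT
        · exact absurd haX (Finset.notMem_empty a)

lemma erase_mem_moveTo {R : Finset (Finset (Fin n))} {S T : Finset (Fin n)} {j : Fin n}
    (hS : S ∈ R) (hT : T ∈ R.erase S) : S.erase j ∈ moveTo R j T := by
  refine mem_moveTo.2 (Or.inl ⟨S, Finset.mem_erase.2 ⟨(Finset.ne_of_mem_erase hT).symm, hS⟩, rfl⟩)

lemma pmerge_moveTo {R : Finset (Finset (Fin n))} {S T : Finset (Fin n)} {j : Fin n}
    (hR : IsPartition R) (hS : S ∈ R) (hj : j ∈ S) (hT : T ∈ R.erase S) :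
    pmerge (moveTo R j T) S = R := by
  have hTR : T ∈ R := Finset.mem_of_mem_erase hT
  have hTS : T ≠ S := Finset.ne_of_mem_erase hT
  have hdisj : Disjoint T S := part_disjoint hR hTR hS hTS
  have hTsd : T \ S = T := Finset.sdiff_eq_self_of_disjoint hdisj
  ext X
  rw [mem_pmerge]
  constructor
  · rintro (⟨B, hB, rfl⟩ | rfl)
    · rcases mem_moveTo.1 hB with ⟨B', hB', rfl⟩ | rfl | rfl
      · have hB'R : B' ∈ R := Finset.mem_of_mem_erase hB'
        by_cases hB'S : B' = S
        · subst hB'S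
          have : B'.erase j \ B' = ∅ :=
            Finset.sdiff_eq_empty_iff_subset.2 (Finset.erase_subset _ _)
          rw [this]
          exact hR.1
        · have : B'.erase j \ S = B' := by
            have hd : Disjoint B' S := part_disjoint hR hB'R hS hB'S
            have hjB' : j ∉ B' := fun h => (Finset.disjoint_left.1 hd) h hj
            rw [Finset.erase_eq_of_notMem hjB', Finset.sdiff_eq_self_of_disjoint hd]
          rwa [this]
      · have : insert j T \ S = T := by
          rw [Finset.insert_sdiff_of_mem _ hj, hTsd]
        rwa [this]
      · simpa using hR.1
    · exact hS
  · intro hX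
    by_cases hXS : X = S
    · exact Or.inr hXS
    · by_cases hXT : X = T
      · subst hXT
        refine Or.inl ⟨insert j X, mem_moveTo.2 (Or.inr (Or.inl rfl)), ?_⟩
        rw [Finset.insert_sdiff_of_mem _ hj, hTsd]
      · have hd : Disjoint X S := part_disjoint hR hX hS hXS
        have hjX : j ∉ X := fun h => (Finset.disjoint_left.1 hd) h hj
        refine Or.inl ⟨X.erase j, mem_moveTo.2 (Or.inl ⟨X, Finset.mem_erase.2 ⟨hXT, hX⟩, rfl⟩), ?_⟩
        rw [Finset.erase_eq_of_notMem hjX, Finset.sdiff_eq_self_of_disjoint hd]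

end Aux2

section Aux3
variable {n : ℕ}

lemma pmerge_erase_eq_moveTo {P : Finset (Finset (Fin n))} {S B₀ : Finset (Fin n)} {j : Fin n}
    (hP : IsPartition P) (hj : j ∈ S) (hB₀ : B₀ ∈ P) (hjB₀ : j ∈ B₀) :
    pmerge P (S.erase j) = moveTo (pmerge P S) j (B₀ \ S) := by
  have hjBS : j ∉ B₀ \ S := fun h => (Finset.mem_sdiff.1 h).2 hj
  ext X
  rw [mem_pmerge, mem_moveTo]
  constructor
  · rintro (⟨B, hB, rfl⟩ | rfl)
    · by_cases hjB : j ∈ B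
      · have hBB₀ : B = B₀ := block_unique hP hB hB₀ hjB hjB₀
        subst hBB₀
        refine Or.inr (Or.inl ?_)
        ext a
        simp only [Finset.mem_sdiff, Finset.mem_erase, Finset.mem_insert]
        by_cases haj : a = j
        · subst haj; simp [hjB]
        · simp [haj]
      · have hBe : B \ S.erase j = B \ S := by
          ext a
          simp only [Finset.mem_sdiff, Finset.mem_erase]
          constructor
          · rintro ⟨h1, h2⟩
            exact ⟨h1, fun hs => h2 ⟨fun he => hjB (he ▸ h1), hs⟩⟩
          · rintro ⟨h1, h2⟩
            exact ⟨h1, fun hs => h2 hs.2⟩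
        rw [hBe]
        by_cases hBT : B \ S = B₀ \ S
        · refine Or.inr (Or.inr ?_)
          rw [hBT]
          by_contra hne
          obtain ⟨a, ha⟩ := Finset.nonempty_iff_ne_empty.2 hne
          have ha' : a ∈ B \ S := by rw [hBT]; exact ha
          have h1 : a ∈ B := (Finset.mem_sdiff.1 ha').1
          have h2 : a ∈ B₀ := (Finset.mem_sdiff.1 ha).1
          have : B = B₀ := block_unique hP hB hB₀ h1 h2
          exact hjB (this ▸ hjB₀)
        · refine Or.inl ⟨B \ S, Finset.mem_erase.2 ⟨hBT, mem_pmerge.2 (Or.inl ⟨B, hB, rfl⟩)⟩, ?_⟩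
          rw [Finset.erase_eq_of_notMem (fun h => (Finset.mem_sdiff.1 h).2 (by
            exact absurd (Finset.mem_sdiff.1 h).1 hjB))]
    · refine Or.inl ⟨S, Finset.mem_erase.2 ⟨?_, mem_pmerge.2 (Or.inr rfl)⟩, rfl⟩
      intro h
      exact hjBS (by rw [← h]; exact hj)
  · rintro (⟨B, hB, rfl⟩ | rfl | rfl)
    · obtain ⟨hBne, hBm⟩ := Finset.mem_erase.1 hB
      rcases mem_pmerge.1 hBm with ⟨B', hB', rfl⟩ | rfl
      · have hjB' : B' ≠ B₀ := fun h => hBne (h ▸ rfl)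
        have hjnB' : j ∉ B' := fun h => hjB' (block_unique hP hB' hB₀ h hjB₀)
        refine Or.inl ⟨B', hB', ?_⟩
        rw [Finset.erase_eq_of_notMem (fun h => hjnB' (Finset.mem_sdiff.1 h).1)]
        ext a
        simp only [Finset.mem_sdiff, Finset.mem_erase]
        constructor
        · rintro ⟨h1, h2⟩
          exact ⟨h1, fun he => h2 ⟨fun haj => hjnB' (haj ▸ h1), he⟩⟩
        · rintro ⟨h1, h2⟩
          exact ⟨h1, fun hs => h2 hs.2⟩
      · exact Or.inr rfl
    · refine Or.inl ⟨B₀, hB₀, ?_⟩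
      ext a
      simp only [Finset.mem_insert, Finset.mem_sdiff, Finset.mem_erase]
      by_cases haj : a = j
      · subst haj; simp [hjB₀]
      · simp [haj]
    · exact Or.inl ⟨∅, hP.1, by simp⟩

lemma moveTo_inj {R : Finset (Finset (Fin n))} {S T₁ T₂ : Finset (Fin n)} {j : Fin n}
    (hR : IsPartition R) (hS : S ∈ R) (hj : j ∈ S)
    (hT₁ : T₁ ∈ R.erase S) (hT₂ : T₂ ∈ R.erase S)
    (h : moveTo R j T₁ = moveTo R j T₂) : T₁ = T₂ := by
  have hjT : ∀ T, T ∈ R.erase S → j ∉ T := by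
    intro T hT hjT
    exact (Finset.ne_of_mem_erase hT)
      (block_unique hR (Finset.mem_of_mem_erase hT) hS hjT hj)
  have h1 : insert j T₁ ∈ moveTo R j T₂ := h ▸ mem_moveTo.2 (Or.inr (Or.inl rfl))
  rcases mem_moveTo.1 h1 with ⟨B, hB, hBe⟩ | he | he
  · exact absurd (hBe ▸ Finset.mem_insert_self j T₁) (Finset.notMem_erase j B)
  · have : T₁ = T₂ := by
      have e1 := congrArg (fun X => Finset.erase X j) he
      simpa [Finset.erase_insert (hjT T₁ hT₁), Finset.erase_insert (hjT T₂ hT₂)] using e1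
    exact this
  · exact absurd (he ▸ Finset.mem_insert_self j T₁) (Finset.notMem_empty j)

lemma fiber_eq {R : Finset (Finset (Fin n))} {S : Finset (Fin n)} {j : Fin n}
    (hR : IsPartition R) (hS : S ∈ R) (hj : j ∈ S) :
    (allPartitions n).filter (fun P => pmerge P S = R) =
      (R.erase S).biUnion
        (fun T => (allPartitions n).filter (fun P => pmerge P (S.erase j) = moveTo R j T)) := by
  ext P
  simp only [Finset.mem_biUnion, Finset.mem_filter, allPartitions, Finset.mem_univ, true_and]
  constructor
  · rintro ⟨hP, hPR⟩
    obtain ⟨B₀, ⟨hB₀, hjB₀⟩, _⟩ := hP.2 j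
    have hkey := pmerge_erase_eq_moveTo hP hj hB₀ hjB₀
    refine ⟨B₀ \ S, ?_, hP, by rw [hkey, hPR]⟩
    rw [← hPR]
    refine Finset.mem_erase.2 ⟨?_, mem_pmerge.2 (Or.inl ⟨B₀, hB₀, rfl⟩)⟩
    intro hBS
    have : j ∈ B₀ \ S := by rw [hBS]; exact hj
    exact (Finset.mem_sdiff.1 this).2 hj
  · rintro ⟨T, hT, hP, hPe⟩
    refine ⟨hP, ?_⟩
    have h1 : pmerge P S = pmerge (pmerge P (S.erase j)) S :=
      (pmerge_pmerge (Finset.erase_subset j S) hP.1).symm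
    rw [h1, hPe, pmerge_moveTo hR hS hj hT]

end Aux3

section Aux4
variable {n : ℕ}

def Sk (π : Equiv.Perm (Fin n)) (k : ℕ) : Finset (Fin n) :=
  Finset.univ.filter fun j => k ≤ (π.symm j : ℕ)

lemma mem_Sk {π : Equiv.Perm (Fin n)} {k : ℕ} {x : Fin n} :
    x ∈ Sk π k ↔ k ≤ (π.symm x : ℕ) := by simp [Sk]

lemma Cafter_eq_Sk (π : Equiv.Perm (Fin n)) (i : Fin n) :
    Cafter π i = Sk π ((π.symm i : ℕ) + 1) := by
  ext x
  simp only [Cafter, Sk, Finset.mem_filter, Finset.mem_univ, true_and, Fin.lt_def]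
  omega

lemma suffix_base {w : Weights n} {π : Equiv.Perm (Fin n)} {k : ℕ}
    {R : Finset (Finset (Fin n))} (hk : Sk π k = ∅) (hR : IsPartition R) :
    ∑ P ∈ (allPartitions n).filter (fun P => pmerge P (Sk π k) = R),
      ∏ j ∈ Sk π k, w j (Cafter π j) (pmerge P (Cafter π j)) = 1 := by
  rw [hk]
  have hdom : (allPartitions n).filter
      (fun P => pmerge P (∅ : Finset (Fin n)) = R) = {R} := by
    ext P
    simp only [allPartitions, Finset.mem_filter, Finset.mem_univ, true_and,
      Finset.mem_singleton]
    constructor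
    · rintro ⟨hP, hPR⟩
      rw [pmerge_empty hP.1] at hPR
      exact hPR
    · rintro rfl
      exact ⟨hR, pmerge_empty hR.1⟩
  rw [hdom]
  simp

lemma suffix_sum (w : Weights n) (hnorm : Normalized w) (π : Equiv.Perm (Fin n)) :
    ∀ (c k : ℕ), (Sk π k).card ≤ c → ∀ R, IsPartition R → Sk π k ∈ R →
    ∑ P ∈ (allPartitions n).filter (fun P => pmerge P (Sk π k) = R),
      ∏ j ∈ Sk π k, w j (Cafter π j) (pmerge P (Cafter π j)) = 1 := by
  intro c
  induction c with
  | zero =>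
    intro k hc R hR hS
    exact suffix_base (Finset.card_eq_zero.1 (Nat.le_zero.1 hc)) hR
  | succ c ih =>
    intro k hc R hR hS
    by_cases hke : Sk π k = ∅
    · exact suffix_base hke hR
    · obtain ⟨j₀, hj₀⟩ := Finset.nonempty_iff_ne_empty.2 hke
      have hkn : k < n := lt_of_le_of_lt (mem_Sk.1 hj₀) (π.symm j₀).is_lt
      set jk : Fin n := π ⟨k, hkn⟩ with hjk_def
      have hsymm : π.symm jk = ⟨k, hkn⟩ := Equiv.symm_apply_apply π ⟨k, hkn⟩
      have hins : Sk π k = insert jk (Sk π (k + 1)) := by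
        ext x
        simp only [mem_Sk, Finset.mem_insert]
        constructor
        · intro hx
          rcases Nat.eq_or_lt_of_le hx with h | h
          · left
            have : π.symm x = ⟨k, hkn⟩ := Fin.ext h.symm
            calc x = π (π.symm x) := (Equiv.apply_symm_apply π x).symm
              _ = jk := by rw [this]
          · right; omega
        · rintro (rfl | hx)
          · rw [hsymm]
          · omega
      have hnotmem : jk ∉ Sk π (k + 1) := by
        simp [mem_Sk, hsymm]
      have hjkS : jk ∈ Sk π k := by rw [hins]; exact Finset.mem_insert_self _ _
      have hCj : Cafter π jk = Sk π (k + 1) := by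
        rw [Cafter_eq_Sk, hsymm]
      have hcard : (Sk π (k + 1)).card ≤ c := by
        rw [hins, Finset.card_insert_of_notMem hnotmem] at hc
        omega
      have herase : (Sk π k).erase jk = Sk π (k + 1) := by
        rw [hins, Finset.erase_insert hnotmem]
      rw [fiber_eq hR hS hjkS]
      rw [Finset.sum_biUnion]
      · have hstep : ∀ T ∈ R.erase (Sk π k),
            ∑ P ∈ (allPartitions n).filter
              (fun P => pmerge P ((Sk π k).erase jk) = moveTo R jk T),
              ∏ j ∈ Sk π k, w j (Cafter π j) (pmerge P (Cafter π j))
            = w jk ((Sk π k).erase jk) (moveTo R jk T) := by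
          intro T hT
          have hpart' : IsPartition (moveTo R jk T) := moveTo_isPartition hR hS hjkS hT
          have hmem' : Sk π (k + 1) ∈ moveTo R jk T := herase ▸ erase_mem_moveTo hS hT
          have hsum1 : ∑ P ∈ (allPartitions n).filter
              (fun P => pmerge P (Sk π (k + 1)) = moveTo R jk T),
              ∏ j ∈ Sk π (k + 1), w j (Cafter π j) (pmerge P (Cafter π j)) = 1 :=
            ih (k + 1) hcard (moveTo R jk T) hpart' hmem'
          rw [herase]
          have h2 : ∀ P ∈ (allPartitions n).filter
              (fun P => pmerge P (Sk π (k + 1)) = moveTo R jk T),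
              ∏ j ∈ Sk π k, w j (Cafter π j) (pmerge P (Cafter π j)) =
                w jk (Sk π (k + 1)) (moveTo R jk T) *
                  ∏ j ∈ Sk π (k + 1), w j (Cafter π j) (pmerge P (Cafter π j)) := by
            intro P hP
            have hPT := (Finset.mem_filter.1 hP).2
            rw [hins, Finset.prod_insert hnotmem, hCj, hPT]
          rw [Finset.sum_congr rfl h2, ← Finset.mul_sum, hsum1, mul_one]
        rw [Finset.sum_congr rfl hstep]
        exact hnorm jk (Sk π k) R hR hS hjkS
      · intro T₁ h₁ T₂ h₂ hne
        simp only [Function.onFun]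
        rw [Finset.disjoint_left]
        intro P hP₁ hP₂
        have e₁ := (Finset.mem_filter.1 hP₁).2
        have e₂ := (Finset.mem_filter.1 hP₂).2
        exact hne (moveTo_inj hR hS hjkS h₁ h₂ (e₁ ▸ e₂ ▸ rfl))

end Aux4

section Aux5
variable {n : ℕ}

lemma Sk_subset (π : Equiv.Perm (Fin n)) {k k' : ℕ} (h : k ≤ k') :
    Sk π k' ⊆ Sk π k := fun x hx => mem_Sk.2 (le_trans h (mem_Sk.1 hx))

lemma Sk_insert_self (π : Equiv.Perm (Fin n)) (i : Fin n) :
    Sk π (π.symm i : ℕ) = insert i (Sk π ((π.symm i : ℕ) + 1)) := by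
  ext x
  simp only [mem_Sk, Finset.mem_insert]
  constructor
  · intro hx
    rcases Nat.eq_or_lt_of_le hx with h | h
    · left
      have hfe : π.symm i = π.symm x := Fin.ext h
      have := congrArg π hfe
      simpa using this.symm
    · right; omega
  · rintro (rfl | hx)
    · exact le_rfl
    · omega

end Aux5

theorem mainsum {n : ℕ} (w : Weights n) (hnorm : Normalized w)
    (v : Finset (Fin n) → Finset (Finset (Fin n)) → ℝ) (i : Fin n)
    (hnull : ∀ S P, IsPartition P → S ∈ P → i ∈ S → mc w v i S P = 0)
    (π : Equiv.Perm (Fin n)) :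
    ∑ P ∈ allPartitions n, pr w π P *
      (v (insert i (Cafter π i)) (pmerge P (insert i (Cafter π i))) -
        v (Cafter π i) (pmerge P (Cafter π i))) = 0 := by
  set m : ℕ := (π.symm i : ℕ) with hm
  have hC : Cafter π i = Sk π (m + 1) := Cafter_eq_Sk π i
  have hins : Sk π m = insert i (Sk π (m + 1)) := Sk_insert_self π i
  have hiS' : i ∉ Sk π (m + 1) := by simp [mem_Sk, hm]
  have hiSm : i ∈ Sk π m := mem_Sk.2 le_rfl
  have heraseSm : (Sk π m).erase i = Sk π (m + 1) := by
    rw [hins, Finset.erase_insert hiS']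
  have hSm' : insert i (Cafter π i) = Sk π m := by rw [hC, ← hins]
  set Afun : Finset (Finset (Fin n)) → ℝ :=
    fun R => ∏ j ∈ Finset.univ \ Sk π m, w j (Cafter π j) (pmerge R (Cafter π j))
    with hAfun
  -- Step A : rewrite each summand
  have key : ∀ P ∈ allPartitions n,
      pr w π P * (v (insert i (Cafter π i)) (pmerge P (insert i (Cafter π i))) -
        v (Cafter π i) (pmerge P (Cafter π i))) =
      Afun (pmerge P (Sk π m)) *
        ((w i (Sk π (m + 1)) (pmerge P (Sk π (m + 1))) *
          (v (Sk π m) (pmerge P (Sk π m)) -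
            v (Sk π (m + 1)) (pmerge P (Sk π (m + 1))))) *
        ∏ j ∈ Sk π (m + 1), w j (Cafter π j) (pmerge P (Cafter π j))) := by
    intro P hP
    have hPp : IsPartition P := (Finset.mem_filter.1 hP).2
    have h1 : pr w π P =
        (∏ j ∈ Finset.univ \ Sk π m, w j (Cafter π j) (pmerge P (Cafter π j))) *
          ∏ j ∈ Sk π m, w j (Cafter π j) (pmerge P (Cafter π j)) := by
      unfold pr
      exact (Finset.prod_sdiff (Finset.subset_univ _)).symm
    have h2 : ∏ j ∈ Finset.univ \ Sk π m, w j (Cafter π j) (pmerge P (Cafter π j)) =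
        Afun (pmerge P (Sk π m)) := by
      refine Finset.prod_congr rfl ?_
      intro j hj
      have hjm : ¬ m ≤ (π.symm j : ℕ) := by
        intro hle
        exact (Finset.mem_sdiff.1 hj).2 (mem_Sk.2 hle)
      have hsub : Sk π m ⊆ Cafter π j := by
        rw [Cafter_eq_Sk]
        exact Sk_subset π (by omega)
      rw [← pmerge_pmerge hsub hPp.1]
    have h3 : ∏ j ∈ Sk π m, w j (Cafter π j) (pmerge P (Cafter π j)) =
        w i (Sk π (m + 1)) (pmerge P (Sk π (m + 1))) *
          ∏ j ∈ Sk π (m + 1), w j (Cafter π j) (pmerge P (Cafter π j)) := by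
      rw [hins, Finset.prod_insert hiS', hC]
    rw [h1, h2, h3, hSm', hC]
    ring
  rw [Finset.sum_congr rfl key]
  -- Step B : group by R = pmerge P (Sk π m)
  have hmaps : ∀ P ∈ allPartitions n,
      pmerge P (Sk π m) ∈ (allPartitions n).filter (fun R => Sk π m ∈ R) := by
    intro P hP
    have hPp : IsPartition P := (Finset.mem_filter.1 hP).2
    refine Finset.mem_filter.2 ⟨?_, S_mem_pmerge⟩
    exact Finset.mem_filter.2 ⟨Finset.mem_univ _, pmerge_isPartition hPp⟩
  rw [← Finset.sum_fiberwise_of_maps_to hmaps]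
  refine Finset.sum_eq_zero ?_
  intro R hRmem
  have hRpart : IsPartition R := by
    have := (Finset.mem_filter.1 hRmem).1
    exact (Finset.mem_filter.1 this).2
  have hSmR : Sk π m ∈ R := (Finset.mem_filter.1 hRmem).2
  rw [fiber_eq hRpart hSmR hiSm, Finset.sum_biUnion]
  · have hTstep : ∀ T ∈ R.erase (Sk π m),
        ∑ P ∈ (allPartitions n).filter
          (fun P => pmerge P ((Sk π m).erase i) = moveTo R i T),
          Afun (pmerge P (Sk π m)) *
            ((w i (Sk π (m + 1)) (pmerge P (Sk π (m + 1))) *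
              (v (Sk π m) (pmerge P (Sk π m)) -
                v (Sk π (m + 1)) (pmerge P (Sk π (m + 1))))) *
            ∏ j ∈ Sk π (m + 1), w j (Cafter π j) (pmerge P (Cafter π j))) =
        Afun R * (w i ((Sk π m).erase i) (moveTo R i T) *
          (v (Sk π m) R - v ((Sk π m).erase i) (moveTo R i T))) := by
      intro T hT
      have hpart' : IsPartition (moveTo R i T) := moveTo_isPartition hRpart hSmR hiSm hT
      have hmem' : Sk π (m + 1) ∈ moveTo R i T := heraseSm ▸ erase_mem_moveTo hSmR hT
      have hsum1 := suffix_sum w hnorm π (Sk π (m + 1)).card (m + 1) le_rfl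
        (moveTo R i T) hpart' hmem'
      rw [heraseSm]
      have hcong : ∀ P ∈ (allPartitions n).filter
          (fun P => pmerge P (Sk π (m + 1)) = moveTo R i T),
          Afun (pmerge P (Sk π m)) *
            ((w i (Sk π (m + 1)) (pmerge P (Sk π (m + 1))) *
              (v (Sk π m) (pmerge P (Sk π m)) -
                v (Sk π (m + 1)) (pmerge P (Sk π (m + 1))))) *
            ∏ j ∈ Sk π (m + 1), w j (Cafter π j) (pmerge P (Cafter π j))) =
          (Afun R * (w i (Sk π (m + 1)) (moveTo R i T) *
            (v (Sk π m) R - v (Sk π (m + 1)) (moveTo R i T)))) *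
            ∏ j ∈ Sk π (m + 1), w j (Cafter π j) (pmerge P (Cafter π j)) := by
        intro P hP
        have hPp : IsPartition P := (Finset.mem_filter.1 (Finset.mem_filter.1 hP).1).2
        have hPT : pmerge P (Sk π (m + 1)) = moveTo R i T := (Finset.mem_filter.1 hP).2
        have hPR : pmerge P (Sk π m) = R := by
          have hsub : Sk π (m + 1) ⊆ Sk π m := Sk_subset π (Nat.le_succ m)
          rw [← pmerge_pmerge hsub hPp.1, hPT, pmerge_moveTo hRpart hSmR hiSm hT]
        rw [hPT, hPR]
        ring
      rw [Finset.sum_congr rfl hcong, ← Finset.mul_sum, hsum1, mul_one]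
    rw [Finset.sum_congr rfl hTstep, ← Finset.mul_sum]
    have h0 := hnull (Sk π m) R hRpart hSmR hiSm
    unfold mc at h0
    rw [h0, mul_zero]
  · intro T₁ h₁ T₂ h₂ hne
    simp only [Function.onFun]
    rw [Finset.disjoint_left]
    intro P hP₁ hP₂
    have e₁ := (Finset.mem_filter.1 hP₁).2
    have e₂ := (Finset.mem_filter.1 hP₂).2
    exact hne (moveTo_inj hRpart hSmR hiSm h₁ h₂ (e₁ ▸ e₂ ▸ rfl))

/-- The Null-Player Axiom for `φ^α`: an `α`-null player receives zero. -/
theorem stmt7 (n : ℕ) (w : Weights n) (hr : InRange w) (hnorm : Normalized w)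
    (v : Game n) (hv0 : ∀ P, v ∅ P = 0) (i : Fin n)
    (hnull : ∀ S P, IsPartition P → S ∈ P → i ∈ S → mc w v i S P = 0) :
    esv w v i = 0 := by
  unfold esv
  rw [Finset.sum_eq_zero (fun π _ => mainsum w hnorm v i hnull π), mul_zero]
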